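/- (Error bound for the discrete stationary state) Let H be a negative selfadjoint operator on L²(ℝ) with one-dimensional kernel spanned by a positive function φ₀ with ∫ φ₀ · φ₀ > 0, let S_d be a finite-dimensional subspace with orthogonal projection Π onto S_d, and let û := argmax{ ⟨Hψ, ψ⟩ : ψ ∈ S_d, ∫ φ₀ ψ = 1 }. Then, provided ∫ φ₀ · Πφ₀ ≠ 0, −⟨H(û − φ₀), û − φ₀⟩ ≤ |∫ φ₀ Πφ₀|^{-2} · ( −⟨H(Πφ₀ − φ₀), Πφ₀ − φ₀⟩ ). -/

import Mathlib

open MeasureTheory RealInnerProductSpace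

/-- Error bound for the discrete stationary state. Let `H` be a negative
selfadjoint operator on `L²(ℝ)` whose kernel is spanned by a (a.e.) positive
function `φ₀` with `⟨φ₀, φ₀⟩ > 0`, let `S` be a finite-dimensional subspace
with orthogonal projection `Π`, and let `uh ∈ S` with `⟨φ₀, uh⟩ = 1` maximize
the quadratic form `⟨Hψ, ψ⟩` over `{ψ ∈ S : ⟨φ₀, ψ⟩ = 1}`. Then, provided
`⟨φ₀, Πφ₀⟩ ≠ 0`,
`−⟨H(uh − φ₀), uh − φ₀⟩ ≤ |⟨φ₀, Πφ₀⟩|⁻² (−⟨H(Πφ₀ − φ₀), Πφ₀ − φ₀⟩)`. -/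
theorem discrete_stationary_state_error_bound
    (H : Lp ℝ 2 (volume : Measure ℝ) →L[ℝ] Lp ℝ 2 (volume : Measure ℝ))
    (hsa : IsSelfAdjoint H)
    (hneg : ∀ v : Lp ℝ 2 (volume : Measure ℝ), ⟪H v, v⟫ ≤ 0)
    (φ₀ : Lp ℝ 2 (volume : Measure ℝ))
    (hφ₀pos : ∀ᵐ x : ℝ, 0 < φ₀ x)
    (hφ₀norm : 0 < ⟪φ₀, φ₀⟫)
    (hker : LinearMap.ker H.toLinearMap = Submodule.span ℝ {φ₀})
    (hHφ₀ : H φ₀ = 0)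
    (S : Submodule ℝ (Lp ℝ 2 (volume : Measure ℝ))) [FiniteDimensional ℝ S]
    [Submodule.HasOrthogonalProjection S]
    (uh : Lp ℝ 2 (volume : Measure ℝ)) (huhS : uh ∈ S) (huhc : ⟪φ₀, uh⟫ = 1)
    (hmax : ∀ ψ : Lp ℝ 2 (volume : Measure ℝ), ψ ∈ S → ⟪φ₀, ψ⟫ = 1 →
      ⟪H ψ, ψ⟫ ≤ ⟪H uh, uh⟫)
    (hproj : ⟪φ₀, (Submodule.orthogonalProjectionOnto S φ₀ : Lp ℝ 2 (volume : Measure ℝ))⟫ ≠ 0) :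
    -⟪H (uh - φ₀), uh - φ₀⟫ ≤
      (|⟪φ₀, (Submodule.orthogonalProjectionOnto S φ₀ : Lp ℝ 2 (volume : Measure ℝ))⟫| ^ 2)⁻¹ *
        (-⟪H ((Submodule.orthogonalProjectionOnto S φ₀ : Lp ℝ 2 (volume : Measure ℝ)) - φ₀),
            (Submodule.orthogonalProjectionOnto S φ₀ : Lp ℝ 2 (volume : Measure ℝ)) - φ₀⟫) := by

  have hsym : ∀ x y : Lp ℝ 2 (volume : Measure ℝ), ⟪H x, y⟫ = ⟪x, H y⟫ := fun x y =>
    hsa.isSymmetric x y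
  have key : ∀ v : Lp ℝ 2 (volume : Measure ℝ),
      ⟪H (v - φ₀), v - φ₀⟫ = ⟪H v, v⟫ := by
    intro v
    have h1 : ⟪H v, φ₀⟫ = 0 := by rw [hsym]; simp [hHφ₀]
    simp [map_sub, inner_sub_left, inner_sub_right, hHφ₀, h1]
  set p : Lp ℝ 2 (volume : Measure ℝ) := (Submodule.orthogonalProjectionOnto S φ₀ : Lp ℝ 2 (volume : Measure ℝ)) with hp
  set c : ℝ := ⟪φ₀, p⟫ with hc
  have hψS : c⁻¹ • p ∈ S := S.smul_mem _ (Submodule.orthogonalProjectionOnto S φ₀).2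
  have hψc : ⟪φ₀, c⁻¹ • p⟫ = 1 := by
    rw [inner_smul_right, ← hc, inv_mul_cancel₀ hproj]
  have hle := hmax _ hψS hψc
  rw [_root_.map_smul, inner_smul_left, inner_smul_right] at hle
  simp only [RCLike.star_def, starRingEnd_apply, star_trivial] at hle
  rw [key uh, key p]
  have hc2 : (0:ℝ) < c ^ 2 := by positivity
  have habs : |c| ^ 2 = c ^ 2 := sq_abs c
  rw [habs]
  have : c⁻¹ * (c⁻¹ * ⟪H p, p⟫) = (c ^ 2)⁻¹ * ⟪H p, p⟫ := by
    rw [← mul_assoc, ← mul_inv, ← sq]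
  rw [this] at hle
  nlinarith [hle]
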